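/- For every integer n ≥ 1 and all a, b ∈ {0,1}, the following image equalities of sets hold: f(2^{n+1} + 2^{n+2}ℤ₂) = 2^{n−1} + 2^{n}ℤ₂; f(2^{n+1} + a·2^{n+2} + 2^{n+3}ℤ₂) = 2^{n−1} + a·2^{n} + 2^{n+1}ℤ₂; and f(2^{n+1} + a·2^{n+2} + b·2^{n+3} + 2^{n+4}ℤ₂) = 2^{n−1} + a·2^{n} + b·2^{n+1} + 2^{n+2}ℤ₂. -/
import Mathlib

open Function Set NNReal

noncomputable def f : ℚ_[2] → ℚ_[2] := fun x => (9 / 4 : ℚ_[2]) * x * (x - 1) ^ 2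

namespace Stmt5Aux

lemma nadd {x y : ℚ_[2]} {m : ℝ} (hx : ‖x‖ ≤ m) (hy : ‖y‖ ≤ m) : ‖x + y‖ ≤ m :=
  le_trans (Padic.nonarchimedean x y) (max_le hx hy)

lemma nsub {x y : ℚ_[2]} {m : ℝ} (hx : ‖x‖ ≤ m) (hy : ‖y‖ ≤ m) : ‖x - y‖ ≤ m := by
  rw [sub_eq_add_neg]; exact nadd hx (by rwa [norm_neg])

lemma norm2 : ‖(2 : ℚ_[2])‖ = 1 / 2 := by
  have h : ‖((2 : ℕ) : ℚ_[2])‖ = ((2 : ℕ) : ℝ)⁻¹ := Padic.norm_p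
  norm_num at h
  simpa using h

lemma norm9 : ‖(9 : ℚ_[2])‖ = 1 := by
  have h8 : ‖(8 : ℚ_[2])‖ = 1 / 8 := by
    have : (8 : ℚ_[2]) = 2 ^ 3 := by norm_num
    rw [this, norm_pow, norm2]; norm_num
  have h : (9 : ℚ_[2]) = 8 + 1 := by norm_num
  rw [h, Padic.add_eq_max_of_ne (by rw [h8, norm_one]; norm_num), h8, norm_one]
  norm_num

lemma norm4 : ‖(4 : ℚ_[2])‖ = 1 / 4 := by
  have h : (4 : ℚ_[2]) = 2 ^ 2 := by norm_num
  rw [h, norm_pow, norm2]; norm_num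

lemma h9ne : (9 : ℚ_[2]) ≠ 0 := by
  intro h
  have := norm9
  rw [h] at this
  norm_num at this

lemma Qbound {x y : ℚ_[2]} (hx : ‖x‖ ≤ 1 / 4) (hy : ‖y‖ ≤ 1 / 4) :
    ‖x ^ 2 + x * y + y ^ 2 - 2 * x - 2 * y‖ ≤ 1 / 8 := by
  have hx2 : ‖x ^ 2‖ ≤ 1 / 8 := by
    rw [norm_pow]
    calc ‖x‖ ^ 2 ≤ (1/4 : ℝ) ^ 2 := pow_le_pow_left₀ (norm_nonneg x) hx 2
    _ ≤ 1/8 := by norm_num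
  have hy2 : ‖y ^ 2‖ ≤ 1 / 8 := by
    rw [norm_pow]
    calc ‖y‖ ^ 2 ≤ (1/4 : ℝ) ^ 2 := pow_le_pow_left₀ (norm_nonneg y) hy 2
    _ ≤ 1/8 := by norm_num
  have hxy : ‖x * y‖ ≤ 1 / 8 := by
    rw [norm_mul]
    calc ‖x‖ * ‖y‖ ≤ (1/4 : ℝ) * (1/4) :=
      mul_le_mul hx hy (norm_nonneg y) (by norm_num)
    _ ≤ 1/8 := by norm_num
  have h2x : ‖2 * x‖ ≤ 1 / 8 := by
    rw [norm_mul, norm2]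
    calc (1/2 : ℝ) * ‖x‖ ≤ (1/2) * (1/4) := by
          exact mul_le_mul_of_nonneg_left hx (by norm_num)
    _ = 1/8 := by norm_num
  have h2y : ‖2 * y‖ ≤ 1 / 8 := by
    rw [norm_mul, norm2]
    calc (1/2 : ℝ) * ‖y‖ ≤ (1/2) * (1/4) := by
          exact mul_le_mul_of_nonneg_left hy (by norm_num)
    _ = 1/8 := by norm_num
  exact nsub (nsub (nadd (nadd hx2 hxy) hy2) h2x) h2y

lemma key (x y : ℚ_[2]) :
    f x - f y = (9 / 4) * (x - y) * ((x ^ 2 + x * y + y ^ 2 - 2 * x - 2 * y) + 1) := by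
  simp only [f]; ring

lemma mem_quarter {c x : ℚ_[2]} {r : ℝ} (hr : r ≤ 1 / 4) (hc : ‖c‖ ≤ 1 / 4)
    (hx : ‖x - c‖ ≤ r) : ‖x‖ ≤ 1 / 4 := by
  have : x = (x - c) + c := by ring
  rw [this]
  exact nadd (le_trans hx hr) hc

lemma image_ball {c : ℚ_[2]} {r : ℝ} (h0 : 0 < r) (hr : r ≤ 1 / 4) (hc : ‖c‖ ≤ 1 / 4) :
    f '' {x : ℚ_[2] | ‖x - c‖ ≤ r} = {y : ℚ_[2] | ‖y - f c‖ ≤ 4 * r} := by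
  have h94 : ‖(9 / 4 : ℚ_[2])‖ = 4 := by
    rw [norm_div, norm9, norm4]; norm_num
  have h49 : ‖(4 / 9 : ℚ_[2])‖ = 1 / 4 := by
    rw [norm_div, norm9, norm4]; norm_num
  ext z
  simp only [mem_image, mem_setOf_eq]
  constructor
  · rintro ⟨x, hx, rfl⟩
    have hx4 : ‖x‖ ≤ 1 / 4 := mem_quarter hr hc hx
    rw [key x c, norm_mul, norm_mul, h94]
    have hQ : ‖(x ^ 2 + x * c + c ^ 2 - 2 * x - 2 * c) + 1‖ ≤ 1 := by
      refine nadd (le_trans (Qbound hx4 hc) (by norm_num)) (by rw [norm_one])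
    calc 4 * ‖x - c‖ * ‖x ^ 2 + x * c + c ^ 2 - 2 * x - 2 * c + 1‖
        ≤ 4 * r * 1 := by
          apply mul_le_mul (by nlinarith [norm_nonneg (x - c)]) hQ (norm_nonneg _)
          positivity
    _ = 4 * r := by ring
  · intro hz
    set S : Set ℚ_[2] := {x : ℚ_[2] | ‖x - c‖ ≤ r} with hS
    set φ : ℚ_[2] → ℚ_[2] := fun x => x + (4 / 9) * (z - f x) with hφ
    have idB : ∀ x y : ℚ_[2],
        φ x - φ y = -((x - y) * (x ^ 2 + x * y + y ^ 2 - 2 * x - 2 * y)) := by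
      intro x y
      simp only [hφ, f]
      field_simp
      ring
    have idA : ∀ x : ℚ_[2],
        φ x - c = (4 / 9) * (z - f c) - (x - c) * (x ^ 2 + x * c + c ^ 2 - 2 * x - 2 * c) := by
      intro x
      simp only [hφ, f]
      field_simp
      ring
    have hmaps : MapsTo φ S S := by
      intro x hx
      have hx4 : ‖x‖ ≤ 1 / 4 := mem_quarter hr hc hx
      simp only [hS, mem_setOf_eq] at hx ⊢
      rw [idA x]
      refine nsub ?_ ?_
      · rw [norm_mul, h49]
        calc (1 / 4 : ℝ) * ‖z - f c‖ ≤ (1 / 4) * (4 * r) := by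
              exact mul_le_mul_of_nonneg_left hz (by norm_num)
        _ = r := by ring
      · rw [norm_mul]
        calc ‖x - c‖ * ‖x ^ 2 + x * c + c ^ 2 - 2 * x - 2 * c‖
            ≤ r * (1 / 8) := mul_le_mul hx (Qbound hx4 hc) (norm_nonneg _) (le_of_lt h0)
        _ ≤ r := by nlinarith
    have hSclosed : IsComplete S := by
      have : S = Metric.closedBall c r := by
        ext x; simp [hS, Metric.mem_closedBall, dist_eq_norm]
      rw [this]
      exact Metric.isClosed_closedBall.isComplete
    have hlip : LipschitzWith (1/8 : ℝ≥0) (hmaps.restrict φ S S) := by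
      apply LipschitzWith.of_dist_le_mul
      rintro ⟨x, hx⟩ ⟨y, hy⟩
      have hx4 : ‖x‖ ≤ 1 / 4 := mem_quarter hr hc hx
      have hy4 : ‖y‖ ≤ 1 / 4 := mem_quarter hr hc hy
      simp only [MapsTo.restrict, Subtype.map, Subtype.dist_eq, dist_eq_norm]
      rw [idB x y, norm_neg, norm_mul]
      have : ((1/8 : ℝ≥0) : ℝ) = 1/8 := by norm_num
      rw [this]
      calc ‖x - y‖ * ‖x ^ 2 + x * y + y ^ 2 - 2 * x - 2 * y‖
          ≤ ‖x - y‖ * (1/8) := mul_le_mul_of_nonneg_left (Qbound hx4 hy4) (norm_nonneg _)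
      _ = 1/8 * ‖x - y‖ := by ring
    have hcontr : ContractingWith (1/8 : ℝ≥0) (hmaps.restrict φ S S) :=
      ⟨by rw [← NNReal.coe_lt_coe]; norm_num, hlip⟩
    have hcS : c ∈ S := by simp [hS, le_of_lt h0]
    obtain ⟨y, hyS, hfix, -⟩ :=
      hcontr.exists_fixedPoint' hSclosed hmaps hcS (edist_ne_top _ _)
    refine ⟨y, hyS, ?_⟩
    have : y + (4 / 9) * (z - f y) = y := hfix
    have h49ne : (4 / 9 : ℚ_[2]) ≠ 0 := by
      intro h
      rw [h, norm_zero] at h49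
      norm_num at h49
    have hz0 : (4 / 9 : ℚ_[2]) * (z - f y) = 0 := by linear_combination this
    rcases mul_eq_zero.mp hz0 with h | h
    · exact absurd h h49ne
    · linear_combination -h

lemma ball_congr {t t' : ℚ_[2]} {s : ℝ} (h : ‖t - t'‖ ≤ s) :
    {y : ℚ_[2] | ‖y - t‖ ≤ s} = {y : ℚ_[2] | ‖y - t'‖ ≤ s} := by
  ext y
  simp only [mem_setOf_eq]
  constructor <;> intro hy
  · have : y - t' = (y - t) + (t - t') := by ring
    rw [this]; exact nadd hy h
  · have : y - t = (y - t') - (t - t') := by ring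
    rw [this]; exact nsub hy h

lemma norm_pow2 (k : ℕ) : ‖(2 : ℚ_[2]) ^ k‖ = (1/2 : ℝ) ^ k := by
  rw [norm_pow, norm2]

lemma pow_half_le {a b : ℕ} (h : a ≤ b) : ((1:ℝ)/2) ^ b ≤ (1/2) ^ a :=
  pow_le_pow_of_le_one (by norm_num) (by norm_num) h

lemma main_case (m j : ℕ) (hj : j ≤ 2) (u : ℚ_[2]) (hu : ‖u‖ ≤ 1) :
    f '' {x : ℚ_[2] | ‖x - 2 ^ (m + 2) * u‖ ≤ (1/2 : ℝ) ^ (m + j + 3)} =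
      {y : ℚ_[2] | ‖y - 2 ^ m * u‖ ≤ (1/2 : ℝ) ^ (m + j + 1)} := by
  have hc : ‖(2 : ℚ_[2]) ^ (m + 2) * u‖ ≤ 1 / 4 := by
    rw [norm_mul, norm_pow2]
    calc (1/2 : ℝ) ^ (m + 2) * ‖u‖ ≤ (1/2) ^ (m + 2) * 1 :=
      mul_le_mul_of_nonneg_left hu (by positivity)
    _ = (1/2) ^ (m + 2) := by ring
    _ ≤ (1/2) ^ 2 := pow_half_le (by omega)
    _ = 1/4 := by norm_num
  have h0 : (0:ℝ) < (1/2 : ℝ) ^ (m + j + 3) := by positivity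
  have hr : (1/2 : ℝ) ^ (m + j + 3) ≤ 1 / 4 := by
    calc (1/2 : ℝ) ^ (m + j + 3) ≤ (1/2) ^ 2 := pow_half_le (by omega)
    _ = 1/4 := by norm_num
  rw [image_ball h0 hr hc]
  have h4r : 4 * (1/2 : ℝ) ^ (m + j + 3) = (1/2) ^ (m + j + 1) := by
    rw [show m + j + 3 = (m + j + 1) + 2 from by omega, pow_add]
    ring
  rw [h4r]
  apply ball_congr
  have hid : f (2 ^ (m + 2) * u) - 2 ^ m * u =
      2 ^ m * u * (9 * 2 ^ (2 * m + 4) * u ^ 2 - 9 * 2 ^ (m + 3) * u + 8) := by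
    simp only [f]
    field_simp
    ring
  have hB : ‖9 * (2:ℚ_[2]) ^ (2 * m + 4) * u ^ 2 - 9 * 2 ^ (m + 3) * u + 8‖ ≤ 1/8 := by
    have h8 : ‖(8 : ℚ_[2])‖ ≤ 1/8 := by
      have : (8 : ℚ_[2]) = 2 ^ 3 := by norm_num
      rw [this, norm_pow2]; norm_num
    have t1 : ‖9 * (2:ℚ_[2]) ^ (2 * m + 4) * u ^ 2‖ ≤ 1/8 := by
      rw [norm_mul, norm_mul, norm9, norm_pow2, norm_pow, one_mul]
      calc (1/2 : ℝ) ^ (2 * m + 4) * ‖u‖ ^ 2 ≤ (1/2) ^ (2 * m + 4) * 1 := by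
            apply mul_le_mul_of_nonneg_left _ (by positivity)
            calc ‖u‖ ^ 2 ≤ 1 ^ 2 := pow_le_pow_left₀ (norm_nonneg u) hu 2
            _ = 1 := one_pow 2
      _ = (1/2) ^ (2 * m + 4) := by ring
      _ ≤ (1/2) ^ 3 := pow_half_le (by omega)
      _ = 1/8 := by norm_num
    have t2 : ‖9 * (2:ℚ_[2]) ^ (m + 3) * u‖ ≤ 1/8 := by
      rw [norm_mul, norm_mul, norm9, norm_pow2, one_mul]
      calc (1/2 : ℝ) ^ (m + 3) * ‖u‖ ≤ (1/2) ^ (m + 3) * 1 :=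
        mul_le_mul_of_nonneg_left hu (by positivity)
      _ = (1/2) ^ (m + 3) := by ring
      _ ≤ (1/2) ^ 3 := pow_half_le (by omega)
      _ = 1/8 := by norm_num
    exact nadd (nsub t1 t2) h8
  rw [hid, norm_mul, norm_mul, norm_pow2]
  calc (1/2 : ℝ) ^ m * ‖u‖ * ‖9 * (2:ℚ_[2]) ^ (2 * m + 4) * u ^ 2 - 9 * 2 ^ (m + 3) * u + 8‖
      ≤ (1/2) ^ m * 1 * (1/8) := by
        apply mul_le_mul _ hB (norm_nonneg _) (by positivity)
        exact mul_le_mul_of_nonneg_left hu (by positivity)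
  _ = (1/2 : ℝ) ^ (m + 3) := by rw [pow_add]; norm_num
  _ ≤ (1/2 : ℝ) ^ (m + j + 1) := pow_half_le (by omega)

lemma norm_le_one_of01 {a : ℚ_[2]} (ha : a = 0 ∨ a = 1) : ‖a‖ ≤ 1 := by
  rcases ha with h | h <;> simp [h]

end Stmt5Aux

theorem stmt5 (n : ℕ) (hn : 1 ≤ n) (a b : ℚ_[2])
    (ha : a = 0 ∨ a = 1) (hb : b = 0 ∨ b = 1) :
    (f '' {x : ℚ_[2] | ‖x - 2 ^ (n + 1)‖ ≤ (1 / 2 : ℝ) ^ (n + 2)} =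
        {x : ℚ_[2] | ‖x - 2 ^ (n - 1)‖ ≤ (1 / 2 : ℝ) ^ n}) ∧
    (f '' {x : ℚ_[2] | ‖x - (2 ^ (n + 1) + a * 2 ^ (n + 2))‖ ≤ (1 / 2 : ℝ) ^ (n + 3)} =
        {x : ℚ_[2] | ‖x - (2 ^ (n - 1) + a * 2 ^ n)‖ ≤ (1 / 2 : ℝ) ^ (n + 1)}) ∧
    (f '' {x : ℚ_[2] |
          ‖x - (2 ^ (n + 1) + a * 2 ^ (n + 2) + b * 2 ^ (n + 3))‖ ≤ (1 / 2 : ℝ) ^ (n + 4)} =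
        {x : ℚ_[2] |
          ‖x - (2 ^ (n - 1) + a * 2 ^ n + b * 2 ^ (n + 1))‖ ≤ (1 / 2 : ℝ) ^ (n + 2)}) := by
  obtain ⟨m, rfl⟩ : ∃ m, n = m + 1 := ⟨n - 1, (Nat.succ_pred_eq_of_pos hn).symm⟩
  have hna : ‖a‖ ≤ 1 := Stmt5Aux.norm_le_one_of01 ha
  have hnb : ‖b‖ ≤ 1 := Stmt5Aux.norm_le_one_of01 hb
  have hu1 : ‖(1 : ℚ_[2])‖ ≤ 1 := by simp
  have hu2 : ‖1 + 2 * a‖ ≤ 1 := by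
    refine Stmt5Aux.nadd hu1 ?_
    rw [norm_mul, Stmt5Aux.norm2]
    nlinarith [norm_nonneg a]
  have hu3 : ‖1 + 2 * a + 4 * b‖ ≤ 1 := by
    refine Stmt5Aux.nadd hu2 ?_
    rw [norm_mul, Stmt5Aux.norm4]
    nlinarith [norm_nonneg b]
  refine ⟨?_, ?_, ?_⟩
  · have e1 : (2 : ℚ_[2]) ^ (m + 1 + 1) = 2 ^ (m + 2) * 1 := by ring
    have e2 : (2 : ℚ_[2]) ^ (m + 1 - 1) = 2 ^ m * 1 := by simp
    have e3 : (1/2 : ℝ) ^ (m + 1 + 2) = (1/2) ^ (m + 0 + 3) := by ring_nf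
    have e4 : (1/2 : ℝ) ^ (m + 1) = (1/2) ^ (m + 0 + 1) := by ring_nf
    rw [e1, e2, show ((1:ℝ)/2) = 1/2 from rfl, e3, e4]
    exact Stmt5Aux.main_case m 0 (by omega) 1 hu1
  · have e1 : (2 : ℚ_[2]) ^ (m + 1 + 1) + a * 2 ^ (m + 1 + 2) = 2 ^ (m + 2) * (1 + 2 * a) := by
      ring
    have e2 : (2 : ℚ_[2]) ^ (m + 1 - 1) + a * 2 ^ (m + 1) = 2 ^ m * (1 + 2 * a) := by
      simp only [Nat.add_sub_cancel]; ring
    have e3 : (1/2 : ℝ) ^ (m + 1 + 3) = (1/2) ^ (m + 1 + 3) := rfl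
    rw [e1, e2]
    exact Stmt5Aux.main_case m 1 (by omega) (1 + 2 * a) hu2
  · have e1 : (2 : ℚ_[2]) ^ (m + 1 + 1) + a * 2 ^ (m + 1 + 2) + b * 2 ^ (m + 1 + 3) =
        2 ^ (m + 2) * (1 + 2 * a + 4 * b) := by ring
    have e2 : (2 : ℚ_[2]) ^ (m + 1 - 1) + a * 2 ^ (m + 1) + b * 2 ^ (m + 1 + 1) =
        2 ^ m * (1 + 2 * a + 4 * b) := by
      simp only [Nat.add_sub_cancel]; ring
    rw [e1, e2]
    exact Stmt5Aux.main_case m 2 (by omega) (1 + 2 * a + 4 * b) hu3
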